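/- arXiv:2202.02407 — 2 statements merged into one kernel-verified Lean document; each statement's English description precedes it below -/
import Mathlib

section
/- For all real a and b, |μ(a) - μ(b)| ≤ μ'(b) · |a - b| · exp(|a - b|). -/
noncomputable def μ (z : ℝ) : ℝ := 1 / (1 + Real.exp (-z))

open Real

lemma exp_denom_pos (x : ℝ) : 0 < 2 + exp x + exp (-x) := by positivity

lemma hasDerivAt_mu (x : ℝ) :
    HasDerivAt μ (1 / (2 + exp x + exp (-x))) x := by
  have h1 : (1 : ℝ) + exp (-x) ≠ 0 := by positivity
  have h : HasDerivAt (fun z : ℝ => 1 / (1 + exp (-z)))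
      (exp (-x) / (1 + exp (-x)) ^ 2) x := by
    have hd : HasDerivAt (fun z : ℝ => 1 + exp (-z)) (-exp (-x)) x := by
      have := (Real.hasDerivAt_exp (-x)).comp x ((hasDerivAt_id x).neg)
      simpa using (this.const_add 1)
    simpa [neg_div, div_eq_mul_inv, Pi.inv_def] using hd.inv h1
  have heq : exp (-x) / (1 + exp (-x)) ^ 2 = 1 / (2 + exp x + exp (-x)) := by
    have hx : exp x * exp (-x) = 1 := by
      rw [← Real.exp_add]; simp
    have h2 : (2 : ℝ) + exp x + exp (-x) ≠ 0 := by positivity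
    field_simp
    nlinarith [hx]
  exact heq ▸ h

lemma deriv_mu (x : ℝ) : deriv μ x = 1 / (2 + exp x + exp (-x)) :=
  (hasDerivAt_mu x).deriv

lemma key_bound (x b : ℝ) :
    1 / (2 + exp x + exp (-x)) ≤ exp |x - b| * (1 / (2 + exp b + exp (-b))) := by
  rw [mul_one_div, div_le_div_iff₀ (exp_denom_pos x) (exp_denom_pos b)]
  have d0 : (0 : ℝ) ≤ |x - b| := abs_nonneg _
  have h1 : exp b ≤ exp |x - b| * exp x := by
    rw [← Real.exp_add]
    exact Real.exp_le_exp.2 (by cases abs_cases (x - b) <;> linarith)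
  have h2 : exp (-b) ≤ exp |x - b| * exp (-x) := by
    rw [← Real.exp_add]
    exact Real.exp_le_exp.2 (by cases abs_cases (x - b) <;> linarith)
  have h3 : (2 : ℝ) ≤ exp |x - b| * 2 := by
    nlinarith [Real.one_le_exp d0]
  nlinarith

theorem logistic_mean_value_bound (a b : ℝ) :
    |μ a - μ b| ≤ deriv μ b * |a - b| * Real.exp (|a - b|) := by
  set C : ℝ := deriv μ b * Real.exp |a - b| with hC
  have hseg : Convex ℝ (segment ℝ b a) := convex_segment b a
  have hderiv : ∀ x ∈ segment ℝ b a,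
      HasDerivWithinAt μ (deriv μ x) (segment ℝ b a) x := fun x _ =>
    ((hasDerivAt_mu x).congr_deriv (deriv_mu x).symm).hasDerivWithinAt
  have hbound : ∀ x ∈ segment ℝ b a, ‖deriv μ x‖ ≤ C := by
    intro x hx
    obtain ⟨t, u, ht, hu, htu, hx⟩ := hx
    have hxb : |x - b| ≤ |a - b| := by
      have hx' : x = t * b + u * a := by rw [← hx]; simp [smul_eq_mul]
      have : x - b = u * (a - b) := by rw [hx']; linear_combination b * htu
      rw [this, abs_mul, abs_of_nonneg hu]
      nlinarith [abs_nonneg (a - b)]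
    have hmon : exp |x - b| ≤ exp |a - b| := Real.exp_le_exp.2 hxb
    have h1 := key_bound x b
    rw [deriv_mu x, Real.norm_eq_abs,
      abs_of_nonneg (by positivity : (0:ℝ) ≤ 1 / (2 + exp x + exp (-x)))]
    calc 1 / (2 + exp x + exp (-x))
        ≤ exp |x - b| * (1 / (2 + exp b + exp (-b))) := h1
      _ ≤ exp |a - b| * (1 / (2 + exp b + exp (-b))) := by
          have : (0:ℝ) ≤ 1 / (2 + exp b + exp (-b)) := by positivity
          nlinarith
      _ = C := by rw [hC, deriv_mu b]; ring
  have := hseg.norm_image_sub_le_of_norm_hasDerivWithin_le hderiv hbound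
    (left_mem_segment ℝ b a) (right_mem_segment ℝ b a)
  rw [Real.norm_eq_abs, Real.norm_eq_abs] at this
  calc |μ a - μ b| ≤ C * |a - b| := this
    _ = deriv μ b * |a - b| * Real.exp |a - b| := by rw [hC]; ring
end

section
/- For all real a and b with |a - b| ≤ 1, |μ(a) - μ(b)| ≤ e · μ'(b) · |a - b|. -/
lemma hasDerivAt_μ (z : ℝ) :
    HasDerivAt μ (Real.exp (-z) / (1 + Real.exp (-z)) ^ 2) z := by
  have hpos : (0:ℝ) < 1 + Real.exp (-z) := by positivity
  have h1 : HasDerivAt (fun z : ℝ => 1 + Real.exp (-z)) (-Real.exp (-z)) z := by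
    simpa using ((Real.hasDerivAt_exp (-z)).comp z (hasDerivAt_neg z)).const_add 1
  have h2 := h1.inv (ne_of_gt hpos)
  have hμ : μ = fun z : ℝ => (1 + Real.exp (-z))⁻¹ := by
    funext z; simp [μ]
  rw [hμ]
  simp only [neg_div, neg_neg] at h2
  exact h2

lemma deriv_ratio (t b : ℝ) (h : |t - b| ≤ 1) :
    Real.exp (-t) / (1 + Real.exp (-t)) ^ 2 ≤
      Real.exp 1 * (Real.exp (-b) / (1 + Real.exp (-b)) ^ 2) := by
  rcases abs_le.1 h with ⟨h1, h2⟩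
  set v := Real.exp (-b) with hvdef
  have hv : 0 < v := Real.exp_pos _
  set r := Real.exp (b - t) with hrdef
  have hr0 : 0 < r := Real.exp_pos _
  have hru : Real.exp (-t) = r * v := by
    rw [hrdef, hvdef, ← Real.exp_add]; ring_nf
  have hre : r ≤ Real.exp 1 := Real.exp_le_exp.2 (by linarith)
  have hre' : 1 ≤ Real.exp 1 * r := by
    rw [hrdef, ← Real.exp_add]
    exact Real.one_le_exp (by linarith)
  have hE1 : (1:ℝ) ≤ Real.exp 1 := Real.one_le_exp one_pos.le
  rw [hru, mul_div_assoc' (Real.exp 1) v _, div_le_div_iff₀ (by positivity) (by positivity)]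
  nlinarith [mul_pos hr0 hv, mul_pos hv hv, mul_pos (mul_pos hr0 hv) hv,
    mul_nonneg (sub_nonneg.2 hre) hv.le,
    mul_nonneg (mul_nonneg (sub_nonneg.2 hre') hv.le) (mul_nonneg hv.le hv.le),
    mul_nonneg (mul_nonneg (sub_nonneg.2 hre) hv.le) hv.le]

theorem logistic_local_mean_value_bound (a b : ℝ) (h : |a - b| ≤ 1) :
    |μ a - μ b| ≤ Real.exp 1 * deriv μ b * |a - b| := by
  have hderiv : deriv μ b = Real.exp (-b) / (1 + Real.exp (-b)) ^ 2 :=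
    (hasDerivAt_μ b).deriv
  have hs : Convex ℝ (Set.Icc (b - 1) (b + 1)) := convex_Icc _ _
  have hb : b ∈ Set.Icc (b - 1) (b + 1) := by
    constructor <;> linarith
  have ha : a ∈ Set.Icc (b - 1) (b + 1) := by
    rcases abs_le.1 h with ⟨h1, h2⟩
    constructor <;> linarith
  have bound : ∀ x ∈ Set.Icc (b - 1) (b + 1),
      ‖Real.exp (-x) / (1 + Real.exp (-x)) ^ 2‖ ≤ Real.exp 1 * deriv μ b := by
    intro x hx
    rw [Real.norm_eq_abs, abs_of_nonneg (by positivity), hderiv]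
    exact deriv_ratio x b (abs_le.2 ⟨by linarith [hx.1], by linarith [hx.2]⟩)
  have key := hs.norm_image_sub_le_of_norm_hasDerivWithin_le
    (f := μ) (f' := fun x => Real.exp (-x) / (1 + Real.exp (-x)) ^ 2)
    (fun x _ => (hasDerivAt_μ x).hasDerivWithinAt) bound hb ha
  simpa [Real.norm_eq_abs] using key
end
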